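/- Let (R_μ)_{μ ∈ I} be a finite family of Hermitian n×n complex matrices. Then |∑_{μ,ν ∈ I} Tr(R_μ R_ν²)·Tr(R_μ)| ≤ √(α₁ · α₂³), and moreover √(α₁ · α₂³) ≤ max{α₁², α₂²}; in particular |β₃| ≤ max{α₁², α₂²}. -/

import Mathlib

open Matrix Finset

/-- Real part of the trace of a complex matrix (the traces in question are real
for Hermitian matrices). -/
noncomputable def rtr {α : Type} [Fintype α] (M : Matrix α α ℂ) : ℝ :=
  (Matrix.trace M).re

/-- α₁ = ∑_μ (Tr R_μ)². -/
noncomputable def alpha1 {α I : Type} [Fintype α] [Fintype I]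
    (R : I → Matrix α α ℂ) : ℝ := ∑ μ, (rtr (R μ)) ^ 2

/-- α₂ = ∑_μ Tr(R_μ²). -/
noncomputable def alpha2 {α I : Type} [Fintype α] [Fintype I]
    (R : I → Matrix α α ℂ) : ℝ := ∑ μ, rtr (R μ * R μ)

/-- β₁ = ∑_{μ,ν} (Tr(R_μ R_ν))². -/
noncomputable def beta1 {α I : Type} [Fintype α] [Fintype I]
    (R : I → Matrix α α ℂ) : ℝ := ∑ μ, ∑ ν, (rtr (R μ * R ν)) ^ 2

/-- β₂ = ∑_{μ,ν} Tr(R_μ R_ν)·Tr(R_μ)·Tr(R_ν). -/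
noncomputable def beta2 {α I : Type} [Fintype α] [Fintype I]
    (R : I → Matrix α α ℂ) : ℝ := ∑ μ, ∑ ν, rtr (R μ * R ν) * rtr (R μ) * rtr (R ν)

/-- β₃ = ∑_{μ,ν} Tr(R_μ R_ν²)·Tr(R_μ). -/
noncomputable def beta3 {α I : Type} [Fintype α] [Fintype I]
    (R : I → Matrix α α ℂ) : ℝ := ∑ μ, ∑ ν, rtr (R μ * (R ν * R ν)) * rtr (R μ)

/-- β₄ = ∑_{μ,ν} Tr(R_μ² R_ν²). -/
noncomputable def beta4 {α I : Type} [Fintype α] [Fintype I]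
    (R : I → Matrix α α ℂ) : ℝ := ∑ μ, ∑ ν, rtr (R μ * R μ * (R ν * R ν))

/-- β₅ = ∑_{μ,ν} Tr(R_μ R_ν R_μ R_ν). -/
noncomputable def beta5 {α I : Type} [Fintype α] [Fintype I]
    (R : I → Matrix α α ℂ) : ℝ := ∑ μ, ∑ ν, rtr (R μ * R ν * R μ * R ν)

/-- max_{i,j ∈ {1,2}} |α_i α_j|. -/
noncomputable def maxAlpha {α I : Type} [Fintype α] [Fintype I]
    (R : I → Matrix α α ℂ) : ℝ :=
  max (max |alpha1 R * alpha1 R| |alpha1 R * alpha2 R|)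
      (max |alpha2 R * alpha1 R| |alpha2 R * alpha2 R|)

/-- max_{u ∈ {1,…,5}} |β_u|. -/
noncomputable def maxBeta {α I : Type} [Fintype α] [Fintype I]
    (R : I → Matrix α α ℂ) : ℝ :=
  max |beta1 R| (max |beta2 R| (max |beta3 R| (max |beta4 R| |beta5 R|)))

section AuxBeta3

attribute [local instance] Matrix.frobeniusSeminormedAddCommGroup

variable {n : ℕ}

lemma frob_sq (A : Matrix (Fin n) (Fin n) ℂ) :
    ‖A‖ ^ 2 = ∑ i, ∑ j, Complex.normSq (A i j) := by
  rw [Matrix.frobenius_norm_def]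
  have h : ∀ i j, ‖A i j‖ ^ (2:ℝ) = Complex.normSq (A i j) := by
    intro i j
    rw [show (2:ℝ) = ((2:ℕ):ℝ) by norm_num, Real.rpow_natCast]
    exact (Complex.normSq_eq_norm_sq _).symm
  simp_rw [h]
  rw [← Real.rpow_natCast _ 2, ← Real.rpow_mul ?_]
  · norm_num
  · exact Finset.sum_nonneg fun i _ => Finset.sum_nonneg fun j _ => Complex.normSq_nonneg _

lemma rtr_mul_entries {A B : Matrix (Fin n) (Fin n) ℂ} (hB : B.IsHermitian) :
    rtr (A * B) = ∑ i, ∑ j,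
      ((A i j).re * (B i j).re + (A i j).im * (B i j).im) := by
  have hB' : ∀ i j, B j i = (starRingEnd ℂ) (B i j) := by
    intro i j
    conv_lhs => rw [← hB]
    simp [Matrix.conjTranspose_apply]
  simp only [rtr, Matrix.trace, Matrix.diag_apply, Matrix.mul_apply, Complex.re_sum]
  refine Finset.sum_congr rfl fun i _ => Finset.sum_congr rfl fun j _ => ?_
  rw [hB' i j]
  simp [Complex.mul_re]

lemma rtr_conjT_mul (M : Matrix (Fin n) (Fin n) ℂ) :
    rtr (Mᴴ * M) = ‖M‖ ^ 2 := by
  rw [frob_sq]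
  simp only [rtr, Matrix.trace, Matrix.diag_apply, Matrix.mul_apply,
    Matrix.conjTranspose_apply, Complex.re_sum]
  rw [Finset.sum_comm]
  refine Finset.sum_congr rfl fun i _ => Finset.sum_congr rfl fun j _ => ?_
  simp [Complex.mul_re, Complex.normSq_apply]

lemma rtr_sq_herm {A : Matrix (Fin n) (Fin n) ℂ} (hA : A.IsHermitian) :
    rtr (A * A) = ‖A‖ ^ 2 := by
  rw [show A * A = Aᴴ * A from by rw [hA]]
  exact rtr_conjT_mul A

lemma rtr_fourth {A B : Matrix (Fin n) (Fin n) ℂ} (hA : A.IsHermitian)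
    (hB : B.IsHermitian) : rtr (A * A * (B * B)) = ‖A * B‖ ^ 2 := by
  rw [← rtr_conjT_mul (A * B)]
  unfold rtr
  congr 1
  calc trace (A * A * (B * B)) = trace (A * (A * B) * B) := by simp only [mul_assoc]
    _ = trace (B * (A * (A * B))) := (trace_mul_comm _ _).symm
    _ = trace ((A * B)ᴴ * (A * B)) := by
        rw [conjTranspose_mul, hA.eq, hB.eq]
        simp only [mul_assoc]

lemma cs_entries {A B : Matrix (Fin n) (Fin n) ℂ} (hA : A.IsHermitian)
    (hB : B.IsHermitian) : rtr (A * B) ^ 2 ≤ rtr (A * A) * rtr (B * B) := by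
  classical
  set v : Matrix (Fin n) (Fin n) ℂ → ((Fin n × Fin n) × Bool) → ℝ :=
    fun C p => if p.2 then (C p.1.1 p.1.2).im else (C p.1.1 p.1.2).re with hv
  have expand : ∀ C D : Matrix (Fin n) (Fin n) ℂ, D.IsHermitian →
      rtr (C * D) = ∑ p : (Fin n × Fin n) × Bool, v C p * v D p := by
    intro C D hD
    rw [rtr_mul_entries hD, Fintype.sum_prod_type, Fintype.sum_prod_type]
    refine Finset.sum_congr rfl fun i _ => Finset.sum_congr rfl fun j _ => ?_
    rw [Fintype.sum_bool]
    simp [hv, add_comm]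
  have key := Finset.sum_mul_sq_le_sq_mul_sq Finset.univ (v A) (v B)
  rw [expand A B hB, expand A A hA, expand B B hB]
  simpa only [sq] using key

lemma rtr_sum {ι : Type} (s : Finset ι) (f : ι → Matrix (Fin n) (Fin n) ℂ) :
    rtr (∑ i ∈ s, f i) = ∑ i ∈ s, rtr (f i) := by
  simp [rtr, Matrix.trace_sum, Complex.re_sum]

/-- For a finite family of Hermitian matrices, |β₃| ≤ √(α₁·α₂³) ≤ max{α₁², α₂²};
in particular |β₃| ≤ max{α₁², α₂²}. -/
theorem abs_beta3_le {n : ℕ} {I : Type} [Fintype I]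
    (R : I → Matrix (Fin n) (Fin n) ℂ) (hR : ∀ μ, (R μ).IsHermitian) :
    |beta3 R| ≤ Real.sqrt (alpha1 R * (alpha2 R) ^ 3) ∧
      Real.sqrt (alpha1 R * (alpha2 R) ^ 3) ≤ max ((alpha1 R) ^ 2) ((alpha2 R) ^ 2) ∧
      |beta3 R| ≤ max ((alpha1 R) ^ 2) ((alpha2 R) ^ 2) := by
  classical
  set S : Matrix (Fin n) (Fin n) ℂ := ∑ ν, R ν * R ν with hSdef
  have hS : S.IsHermitian := by
    have : Sᴴ = S := by
      rw [hSdef, conjTranspose_sum]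
      exact Finset.sum_congr rfl fun ν _ => by rw [conjTranspose_mul, (hR ν).eq]
    exact this
  have hRS : ∀ μ, rtr (R μ * S) = ∑ ν, rtr (R μ * (R ν * R ν)) := by
    intro μ
    rw [hSdef, Finset.mul_sum, rtr_sum]
  have hbeta : beta3 R = ∑ μ, rtr (R μ * S) * rtr (R μ) := by
    unfold beta3
    exact Finset.sum_congr rfl fun μ _ => by rw [hRS μ, Finset.sum_mul]
  have ha2 : alpha2 R = ∑ μ, ‖R μ‖ ^ 2 := Finset.sum_congr rfl fun μ _ => rtr_sq_herm (hR μ)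
  have ha2nonneg : 0 ≤ alpha2 R := by
    rw [ha2]; positivity
  have ha1nonneg : 0 ≤ alpha1 R := Finset.sum_nonneg fun μ _ => sq_nonneg _
  have hC : beta3 R ^ 2 ≤ (∑ μ, rtr (R μ * S) ^ 2) * alpha1 R := by
    rw [hbeta]
    exact Finset.sum_mul_sq_le_sq_mul_sq Finset.univ (fun μ => rtr (R μ * S))
      (fun μ => rtr (R μ))
  have hSS : rtr (S * S) ≤ alpha2 R ^ 2 := by
    have hexp : S * S = ∑ μ, ∑ ν, R μ * R μ * (R ν * R ν) := by
      rw [hSdef, Finset.sum_mul_sum]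
    calc rtr (S * S) = ∑ μ, ∑ ν, rtr (R μ * R μ * (R ν * R ν)) := by
          rw [hexp, rtr_sum]
          exact Finset.sum_congr rfl fun μ _ => rtr_sum _ _
      _ = ∑ μ, ∑ ν, ‖R μ * R ν‖ ^ 2 := by
          exact Finset.sum_congr rfl fun μ _ => Finset.sum_congr rfl fun ν _ =>
            rtr_fourth (hR μ) (hR ν)
      _ ≤ ∑ μ, ∑ ν, (‖R μ‖ * ‖R ν‖) ^ 2 := by
          refine Finset.sum_le_sum fun μ _ => Finset.sum_le_sum fun ν _ => ?_
          exact pow_le_pow_left₀ (norm_nonneg _) (Matrix.frobenius_norm_mul _ _) 2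
      _ = alpha2 R ^ 2 := by
          rw [ha2, sq (∑ μ, ‖R μ‖ ^ 2), Finset.sum_mul_sum]
          exact Finset.sum_congr rfl fun μ _ => Finset.sum_congr rfl fun ν _ => by ring
  have hD : ∑ μ, rtr (R μ * S) ^ 2 ≤ alpha2 R * alpha2 R ^ 2 := by
    calc ∑ μ, rtr (R μ * S) ^ 2 ≤ ∑ μ, rtr (R μ * R μ) * rtr (S * S) :=
          Finset.sum_le_sum fun μ _ => cs_entries (hR μ) hS
      _ = alpha2 R * rtr (S * S) := by rw [alpha2, ← Finset.sum_mul]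
      _ ≤ alpha2 R * alpha2 R ^ 2 := mul_le_mul_of_nonneg_left hSS ha2nonneg
  have hmain : beta3 R ^ 2 ≤ alpha1 R * alpha2 R ^ 3 := by nlinarith [hC, hD, ha1nonneg]
  have h1 : |beta3 R| ≤ Real.sqrt (alpha1 R * alpha2 R ^ 3) := by
    rw [← Real.sqrt_sq_eq_abs]
    exact Real.sqrt_le_sqrt hmain
  have h2 : Real.sqrt (alpha1 R * alpha2 R ^ 3) ≤ max (alpha1 R ^ 2) (alpha2 R ^ 2) := by
    set m := max (alpha1 R) (alpha2 R) with hm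
    have hmnn : 0 ≤ m := le_trans ha1nonneg (le_max_left _ _)
    have h1' : alpha1 R ≤ m := le_max_left _ _
    have h2' : alpha2 R ≤ m := le_max_right _ _
    have hle : alpha1 R * alpha2 R ^ 3 ≤ (m ^ 2) ^ 2 := by
      have h3 : alpha2 R ^ 3 ≤ m ^ 3 := pow_le_pow_left₀ ha2nonneg h2' 3
      calc alpha1 R * alpha2 R ^ 3 ≤ m * m ^ 3 :=
            mul_le_mul h1' h3 (by positivity) hmnn
        _ = (m ^ 2) ^ 2 := by ring
    have hsq : Real.sqrt (alpha1 R * alpha2 R ^ 3) ≤ m ^ 2 := by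
      rw [show m ^ 2 = Real.sqrt ((m ^ 2) ^ 2) by rw [Real.sqrt_sq (by positivity)]]
      exact Real.sqrt_le_sqrt hle
    refine hsq.trans (le_of_eq ?_)
    rcases le_total (alpha1 R) (alpha2 R) with h | h
    · rw [hm, max_eq_right h, max_eq_right (pow_le_pow_left₀ ha1nonneg h 2)]
    · rw [hm, max_eq_left h, max_eq_left (pow_le_pow_left₀ ha2nonneg h 2)]
  exact ⟨h1, h2, h1.trans h2⟩

end AuxBeta3
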